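/- arXiv:2007.05923 — 3 statements merged into one kernel-verified Lean document; each statement's English description precedes it below -/
import Mathlib

section
/- Let q = 2^m with m even. Then the number of nonzero cubic residues x in GF(q)^* with absolute trace Tr_{q/2}(x) = 0 equals (2^m − 2 + (−2)^(m/2+1))/6. -/
open Finset Polynomial

open scoped Classical

noncomputable instance stmt2FintypeAux (m : ℕ) : Fintype (GaloisField 2 m) :=
  Fintype.ofFinite _

namespace Stmt2Aux

variable (m : ℕ)

/-- The additive character of `ZMod 2` with values in `ℤ`. -/
def e (t : ZMod 2) : ℤ := if t = 0 then 1 else -1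

lemma e_add (a b : ZMod 2) : e (a + b) = e a * e b := by revert a b; decide

/-- Absolute trace. -/
noncomputable def tr (x : GaloisField 2 m) : ZMod 2 :=
  Algebra.trace (ZMod 2) (GaloisField 2 m) x

lemma tr_add (x y : GaloisField 2 m) : tr m (x + y) = tr m x + tr m y := by simp [tr]

/-- Frobenius as an algebra equivalence over `ZMod 2`. -/
noncomputable def frobAlg : GaloisField 2 m ≃ₐ[ZMod 2] GaloisField 2 m :=
  AlgEquiv.ofRingEquiv (f := frobeniusEquiv (GaloisField 2 m) 2)
    (fun r => by
      simp only [frobeniusEquiv_def, ← map_pow]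
      congr 1
      exact ZMod.pow_card r)

lemma tr_sq (x : GaloisField 2 m) : tr m (x ^ 2) = tr m x := by
  have := Algebra.trace_eq_of_algEquiv (frobAlg m) x
  simpa [tr, frobAlg, AlgEquiv.ofRingEquiv, frobeniusEquiv_def, frobenius_def] using this

lemma exists_tr_one {c : GaloisField 2 m} (hc : c ≠ 0) :
    ∃ b : GaloisField 2 m, tr m (c * b) = 1 := by
  have hnd := traceForm_nondegenerate (ZMod 2) (GaloisField 2 m)
  by_contra h
  push_neg at h
  apply hc
  apply hnd.1 c
  intro y
  rw [Algebra.traceForm_apply]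
  have := h y
  have h2 : ∀ t : ZMod 2, t ≠ 1 → t = 0 := by decide
  exact h2 _ this

lemma sum_e_eq_zero {c : GaloisField 2 m} (hc : c ≠ 0) :
    ∑ x : GaloisField 2 m, e (tr m (c * x)) = 0 := by
  obtain ⟨b, hb⟩ := exists_tr_one m hc
  have key : ∑ x : GaloisField 2 m, e (tr m (c * x))
      = - ∑ x : GaloisField 2 m, e (tr m (c * x)) := by
    calc ∑ x : GaloisField 2 m, e (tr m (c * x))
        = ∑ x : GaloisField 2 m, e (tr m (c * (x + b))) :=
          (Fintype.sum_equiv (Equiv.addRight b)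
            (fun x => e (tr m (c * (x + b)))) _ (fun x => rfl)).symm
      _ = - ∑ x : GaloisField 2 m, e (tr m (c * x)) := by
          rw [← Finset.sum_neg_distrib]
          refine Finset.sum_congr rfl fun x _ => ?_
          have hadd : tr m (c * (x + b)) = tr m (c * x) + tr m (c * b) := by
            rw [mul_add]; exact map_add (Algebra.trace (ZMod 2) (GaloisField 2 m)) _ _
          rw [hadd, e_add, hb]
          show e (tr m (c * x)) * (-1) = -e (tr m (c * x))
          ring
  linarith


lemma card_F (hm : 1 ≤ m) : Fintype.card (GaloisField 2 m) = 2 ^ m := by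
  rw [← Nat.card_eq_fintype_card]
  exact GaloisField.card 2 m (by omega)

lemma three_dvd (hm : 1 ≤ m) (hme : m % 2 = 0) : 3 ∣ 2 ^ m - 1 := by
  obtain ⟨k, rfl⟩ : ∃ k, m = 2 * k := ⟨m / 2, by omega⟩
  have h4 : 2 ^ (2 * k) = 4 ^ k := by rw [pow_mul]; norm_num
  have hmod : 4 ^ k % 3 = 1 := by
    rw [Nat.pow_mod]; simp
  have hge : 1 ≤ 4 ^ k := Nat.one_le_pow _ _ (by norm_num)
  rw [h4]; omega

lemma card_cubeRoots (hm : 1 ≤ m) (hme : m % 2 = 0) :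
    (univ.filter fun u : GaloisField 2 m => u ^ 3 = 1).card = 3 := by
  have hdvd : 3 ∣ Fintype.card (GaloisField 2 m)ˣ := by
    rw [Fintype.card_units, card_F m hm]
    exact three_dvd m hm hme
  obtain ⟨ζ, hζ⟩ := exists_prime_orderOf_dvd_card 3 hdvd
  have hζ3 : ζ ^ 3 = 1 := by rw [← hζ]; exact pow_orderOf_eq_one ζ
  have hζne : ζ ≠ 1 := by
    intro h; rw [h, orderOf_one] at hζ; omega
  have hζ2ne : ζ ^ 2 ≠ 1 := by
    intro h
    have := orderOf_dvd_of_pow_eq_one h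
    rw [hζ] at this; omega
  -- upper bound
  have hub : (univ.filter fun u : GaloisField 2 m => u ^ 3 = 1).card ≤ 3 := by
    have hsub : (univ.filter fun u : GaloisField 2 m => u ^ 3 = 1)
        ⊆ (nthRoots 3 (1 : GaloisField 2 m)).toFinset := by
      intro u hu
      rw [Multiset.mem_toFinset, mem_nthRoots (by norm_num)]
      exact (mem_filter.mp hu).2
    calc (univ.filter fun u : GaloisField 2 m => u ^ 3 = 1).card
        ≤ (nthRoots 3 (1 : GaloisField 2 m)).toFinset.card := Finset.card_le_card hsub
      _ ≤ Multiset.card (nthRoots 3 (1 : GaloisField 2 m)) := Multiset.toFinset_card_le _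
      _ ≤ 3 := card_nthRoots 3 1
  -- lower bound
  have hlb : ({(1 : GaloisField 2 m), (ζ : GaloisField 2 m), ((ζ ^ 2 : (GaloisField 2 m)ˣ) : GaloisField 2 m)} : Finset (GaloisField 2 m))
      ⊆ univ.filter fun u : GaloisField 2 m => u ^ 3 = 1 := by
    intro u hu
    simp only [mem_insert, mem_singleton] at hu
    rw [mem_filter]
    refine ⟨mem_univ _, ?_⟩
    rcases hu with rfl | rfl | rfl
    · simp
    · rw [← Units.val_pow_eq_pow_val, hζ3, Units.val_one]
    · rw [← Units.val_pow_eq_pow_val, ← pow_mul]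
      rw [show (2 * 3) = 3 * 2 by ring, pow_mul, hζ3, one_pow, Units.val_one]
  have hcard : ({(1 : GaloisField 2 m), (ζ : GaloisField 2 m), ((ζ ^ 2 : (GaloisField 2 m)ˣ) : GaloisField 2 m)} : Finset (GaloisField 2 m)).card = 3 := by
    rw [Finset.card_insert_of_notMem, Finset.card_insert_of_notMem, Finset.card_singleton]
    · simp only [mem_singleton]
      intro h
      have h2 : ζ * 1 = ζ * ζ := by rw [mul_one, ← pow_two]; exact Units.ext h
      exact hζne (mul_left_cancel h2).symm
    · simp only [mem_insert, mem_singleton]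
      push_neg
      refine ⟨fun h => hζne (Units.ext (by simpa using h)).symm,
        fun h => hζ2ne (Units.ext (by simpa using h)).symm⟩
  have := Finset.card_le_card hlb
  omega

lemma card_fiber (hm : 1 ≤ m) (hme : m % 2 = 0) {x z₀ : GaloisField 2 m}
    (hx : x ≠ 0) (hz₀ : z₀ ≠ 0) (hz3 : z₀ ^ 3 = x) :
    (univ.filter fun z : GaloisField 2 m => z ^ 3 = x).card = 3 := by
  have key : (univ.filter fun z : GaloisField 2 m => z ^ 3 = x).card
      = (univ.filter fun u : GaloisField 2 m => u ^ 3 = 1).card := by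
    apply Finset.card_bij (fun z _ => z / z₀)
    · intro z hz
      rw [mem_filter] at hz ⊢
      refine ⟨mem_univ _, ?_⟩
      rw [div_pow, hz.2, hz3, div_self hx]
    · intro a ha b hb h
      field_simp at h; exact h
    · intro u hu
      rw [mem_filter] at hu
      refine ⟨u * z₀, ?_, ?_⟩
      · rw [mem_filter]
        refine ⟨mem_univ _, ?_⟩
        rw [mul_pow, hu.2, one_mul, hz3]
      · rw [mul_div_assoc, div_self hz₀, mul_one]
  rw [key, card_cubeRoots m hm hme]

/-- the main counting lemma: #{z ≠ 0, tr z³ = 0} = 3 N -/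
lemma card_T' (hm : 1 ≤ m) (hme : m % 2 = 0) :
    (univ.filter fun z : GaloisField 2 m => z ≠ 0 ∧ tr m (z ^ 3) = 0).card
      = 3 * (univ.filter fun x : GaloisField 2 m =>
          x ≠ 0 ∧ (∃ z : GaloisField 2 m, z ≠ 0 ∧ z ^ 3 = x) ∧ tr m x = 0).card := by
  set P : GaloisField 2 m → Prop := fun x =>
    x ≠ 0 ∧ (∃ z : GaloisField 2 m, z ≠ 0 ∧ z ^ 3 = x) ∧ tr m x = 0 with hP
  rw [Finset.card_eq_sum_card_fiberwise (f := fun z => z ^ 3)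
    (t := univ.filter P)]
  · rw [Finset.sum_congr rfl (g := fun _ => 3), Finset.sum_const, smul_eq_mul, mul_comm]
    intro x hx
    rw [mem_filter] at hx
    obtain ⟨-, hx0, ⟨z₀, hz₀, hz3⟩, htr⟩ := hx
    have heq : ((univ.filter fun z : GaloisField 2 m => z ≠ 0 ∧ tr m (z ^ 3) = 0).filter
        fun z => z ^ 3 = x) = univ.filter fun z : GaloisField 2 m => z ^ 3 = x := by
      ext z
      simp only [Finset.filter_filter, mem_filter, mem_univ, true_and]
      constructor
      · rintro ⟨-, h⟩; exact h
      · intro h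
        refine ⟨⟨?_, ?_⟩, h⟩
        · intro h0; rw [h0] at h; simp at h; exact hx0 h.symm
        · rw [h]; exact htr
    rw [heq]
    exact card_fiber m hm hme hx0 hz₀ hz3
  · intro z hz
    rw [mem_coe, mem_filter] at hz ⊢
    exact ⟨mem_univ _, pow_ne_zero _ hz.2.1, ⟨z, hz.2.1, rfl⟩, hz.2.2⟩

lemma tr_one (hm : 1 ≤ m) (hme : m % 2 = 0) : tr m 1 = 0 := by
  have h1 : (1 : GaloisField 2 m) = algebraMap (ZMod 2) (GaloisField 2 m) 1 := (map_one _).symm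
  rw [tr, h1, Algebra.trace_algebraMap, GaloisField.finrank 2 (show m ≠ 0 by omega)]
  rw [nsmul_eq_mul, mul_one]
  exact (ZMod.natCast_eq_zero_iff m 2).mpr (by omega)

lemma sum_e_ite (c : GaloisField 2 m) (hm : 1 ≤ m) :
    ∑ x : GaloisField 2 m, e (tr m (c * x)) = if c = 0 then (2 ^ m : ℤ) else 0 := by
  by_cases hc : c = 0
  · subst hc
    simp only [if_pos rfl, zero_mul]
    have : tr m 0 = 0 := by simp [tr]
    rw [Finset.sum_congr rfl (fun x _ => by rw [this])]
    rw [Finset.sum_const, card_univ, card_F m hm]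
    show (2 ^ m : ℕ) • (1 : ℤ) = _
    simp
  · rw [if_neg hc]; exact sum_e_eq_zero m hc

lemma S_sq (hm : 1 ≤ m) (hme : m % 2 = 0) :
    (∑ x : GaloisField 2 m, e (tr m (x ^ 3))) * (∑ x : GaloisField 2 m, e (tr m (x ^ 3)))
      = 4 * 2 ^ m := by
  have h2 : (2 : GaloisField 2 m) = 0 := by
    have := CharP.cast_eq_zero (GaloisField 2 m) 2
    exact_mod_cast this
  set s : GaloisField 2 m → GaloisField 2 m :=
    fun u => (frobeniusEquiv (GaloisField 2 m) 2).symm u with hs_def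
  have hs : ∀ u, (s u) ^ 2 = u := by
    intro u
    have := frobenius_apply_frobeniusEquiv_symm (GaloisField 2 m) 2 u
    rwa [frobenius_def] at this
  have key : ∀ x u : GaloisField 2 m,
      e (tr m (x ^ 3)) * e (tr m ((x + u) ^ 3))
        = e (tr m ((s u + u ^ 2) * x)) * e (tr m (u ^ 3)) := by
    intro x u
    rw [← e_add, ← e_add]
    congr 1
    rw [← tr_add, ← tr_add]
    have hpoly : x ^ 3 + (x + u) ^ 3 = (x ^ 2 * u + x * u ^ 2) + u ^ 3 := by
      linear_combination (x ^ 3 + x ^ 2 * u + x * u ^ 2) * h2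
    rw [hpoly, tr_add, tr_add]
    congr 1
    -- tr (x²u + xu²) = tr ((s u + u²) x)
    have h1 : x ^ 2 * u = (x * s u) ^ 2 := by
      rw [mul_pow, hs]
    have htr1 : tr m (x ^ 2 * u) = tr m (s u * x) := by
      rw [h1, tr_sq, mul_comm]
    have htr2 : tr m (x * u ^ 2) = tr m (u ^ 2 * x) := by rw [mul_comm]
    rw [tr_add, htr1, htr2, add_mul, tr_add]
  calc (∑ x : GaloisField 2 m, e (tr m (x ^ 3))) * (∑ y : GaloisField 2 m, e (tr m (y ^ 3)))
      = ∑ x : GaloisField 2 m, ∑ y : GaloisField 2 m,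
          e (tr m (x ^ 3)) * e (tr m (y ^ 3)) := by
        rw [Finset.sum_mul_sum]
    _ = ∑ x : GaloisField 2 m, ∑ u : GaloisField 2 m,
          e (tr m (x ^ 3)) * e (tr m ((x + u) ^ 3)) := by
        refine Finset.sum_congr rfl fun x _ => ?_
        exact (Fintype.sum_equiv (Equiv.addLeft x)
          (fun u => e (tr m (x ^ 3)) * e (tr m ((x + u) ^ 3)))
          (fun y => e (tr m (x ^ 3)) * e (tr m (y ^ 3))) (fun u => rfl)).symm
    _ = ∑ u : GaloisField 2 m, ∑ x : GaloisField 2 m,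
          e (tr m ((s u + u ^ 2) * x)) * e (tr m (u ^ 3)) := by
        rw [Finset.sum_comm]
        exact Finset.sum_congr rfl fun u _ => Finset.sum_congr rfl fun x _ => key x u
    _ = ∑ u : GaloisField 2 m,
          (if s u + u ^ 2 = 0 then (2 ^ m : ℤ) else 0) * e (tr m (u ^ 3)) := by
        refine Finset.sum_congr rfl fun u _ => ?_
        rw [← Finset.sum_mul, sum_e_ite m _ hm]
    _ = ∑ u : GaloisField 2 m,
          (if u ^ 4 = u then (2 ^ m : ℤ) else 0) * e (tr m (u ^ 3)) := by
        refine Finset.sum_congr rfl fun u _ => ?_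
        congr 1
        have hcond : s u + u ^ 2 = 0 ↔ u ^ 4 = u := by
          rw [add_eq_zero_iff_eq_neg, CharTwo.neg_eq]
          show (frobeniusEquiv (GaloisField 2 m) 2).symm u = u ^ 2 ↔ u ^ 4 = u
          have h24 : ((u : GaloisField 2 m) ^ 2) ^ 2 = u ^ 4 := by ring
          constructor
          · intro h
            have hu := hs u
            rw [hs_def] at hu
            simp only at hu
            rw [h, h24] at hu
            exact hu
          · intro h
            have hinj : Function.Injective (frobenius (GaloisField 2 m) 2) :=
              frobenius_inj _ 2
            apply hinj
            rw [frobenius_apply_frobeniusEquiv_symm, frobenius_def, h24, h]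
        simp [hcond]
    _ = ∑ u ∈ univ.filter (fun u : GaloisField 2 m => u ^ 4 = u),
          (2 ^ m : ℤ) * e (tr m (u ^ 3)) := by
        rw [Finset.sum_filter]
        refine Finset.sum_congr rfl fun u _ => ?_
        by_cases h : u ^ 4 = u <;> simp [h]
    _ = ∑ u ∈ univ.filter (fun u : GaloisField 2 m => u ^ 4 = u), (2 ^ m : ℤ) := by
        refine Finset.sum_congr rfl fun u hu => ?_
        rw [mem_filter] at hu
        have : tr m (u ^ 3) = 0 := by
          by_cases h0 : u = 0
          · rw [h0]; simpa [tr] using (by simp [tr] : tr m 0 = 0)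
          · have hu3 : u ^ 3 = 1 := by
              have h4 : u * u ^ 3 = u * 1 := by
                rw [mul_one, show u * u ^ 3 = u ^ 4 by ring, hu.2]
              exact mul_left_cancel₀ h0 h4
            rw [hu3]; exact tr_one m hm hme
        rw [this]
        show (2 ^ m : ℤ) * 1 = _
        ring
    _ = 4 * 2 ^ m := by
        rw [Finset.sum_const]
        have hset : (univ.filter fun u : GaloisField 2 m => u ^ 4 = u)
            = insert (0 : GaloisField 2 m)
                (univ.filter fun u : GaloisField 2 m => u ^ 3 = 1) := by
          ext u
          simp only [mem_filter, mem_univ, true_and, mem_insert]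
          constructor
          · intro h
            by_cases h0 : u = 0
            · exact Or.inl h0
            · refine Or.inr ?_
              have h4 : u * u ^ 3 = u * 1 := by
                rw [mul_one, show u * u ^ 3 = u ^ 4 by ring, h]
              exact mul_left_cancel₀ h0 h4
          · rintro (rfl | h)
            · simp
            · rw [show (u : GaloisField 2 m) ^ 4 = u * u ^ 3 by ring, h, mul_one]
        rw [hset, Finset.card_insert_of_notMem, card_cubeRoots m hm hme]
        · show ((3 + 1 : ℕ) : ℤ) • (2 ^ m : ℤ) = 4 * 2 ^ m
          simp
        · simp only [mem_filter, mem_univ, true_and]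
          intro h
          rw [zero_pow (by norm_num)] at h
          exact zero_ne_one h

lemma S_eq (hm : 1 ≤ m) :
    ∑ x : GaloisField 2 m, e (tr m (x ^ 3))
      = 2 * ((univ.filter fun z : GaloisField 2 m => tr m (z ^ 3) = 0).card : ℤ) - 2 ^ m := by
  have : ∀ x : GaloisField 2 m, e (tr m (x ^ 3))
      = if tr m (x ^ 3) = 0 then (1 : ℤ) else -1 := by
    intro x
    unfold e
    split <;> simp_all
  rw [Finset.sum_congr rfl fun x _ => this x, Finset.sum_ite, Finset.sum_const,
    Finset.sum_const]
  have hcompl := Finset.card_filter_add_card_filter_not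
    (s := (univ : Finset (GaloisField 2 m))) (p := fun z => tr m (z ^ 3) = 0)
  rw [Finset.card_univ, card_F m hm] at hcompl
  set a := (univ.filter fun z : GaloisField 2 m => tr m (z ^ 3) = 0).card
  set b := (univ.filter fun z : GaloisField 2 m => ¬ tr m (z ^ 3) = 0).card
  have hb : b = 2 ^ m - a := by omega
  have ha : a ≤ 2 ^ m := by omega
  rw [hb]
  simp only [nsmul_eq_mul, mul_one, mul_neg]
  push_cast [Nat.cast_sub ha]
  ring

lemma T_split (hm : 1 ≤ m) :
    ((univ.filter fun z : GaloisField 2 m => tr m (z ^ 3) = 0).card : ℤ)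
      = ((univ.filter fun z : GaloisField 2 m => z ≠ 0 ∧ tr m (z ^ 3) = 0).card : ℤ) + 1 := by
  have hset : (univ.filter fun z : GaloisField 2 m => tr m (z ^ 3) = 0)
      = insert (0 : GaloisField 2 m)
          (univ.filter fun z : GaloisField 2 m => z ≠ 0 ∧ tr m (z ^ 3) = 0) := by
    ext z
    simp only [mem_filter, mem_univ, true_and, mem_insert]
    constructor
    · intro h
      by_cases h0 : z = 0
      · exact Or.inl h0
      · exact Or.inr ⟨h0, h⟩
    · rintro (rfl | ⟨-, h⟩)
      · rw [zero_pow (by norm_num)]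
        simp [tr]
      · exact h
  rw [hset, Finset.card_insert_of_notMem (by simp)]
  push_cast
  ring


end Stmt2Aux

open Stmt2Aux in
theorem stmt_2 (m : ℕ) (hm : 1 ≤ m) (hmeven : m % 2 = 0) :
    (6 : ℤ) * (Nat.card {x : GaloisField 2 m //
        x ≠ 0 ∧ (∃ z : GaloisField 2 m, z ≠ 0 ∧ z ^ 3 = x) ∧
          Algebra.trace (ZMod 2) (GaloisField 2 m) x = 0} : ℤ) =
      2 ^ m - 2 + (-2 : ℤ) ^ (m / 2 + 1) := by
  obtain ⟨k, hk⟩ : ∃ k, m = 2 * k := ⟨m / 2, by omega⟩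
  have hm2 : m / 2 = k := by omega
  rw [hm2]
  -- N as filter card
  have hN : (Nat.card {x : GaloisField 2 m //
      x ≠ 0 ∧ (∃ z : GaloisField 2 m, z ≠ 0 ∧ z ^ 3 = x) ∧
        Algebra.trace (ZMod 2) (GaloisField 2 m) x = 0})
      = (univ.filter fun x : GaloisField 2 m =>
          x ≠ 0 ∧ (∃ z : GaloisField 2 m, z ≠ 0 ∧ z ^ 3 = x) ∧ tr m x = 0).card := by
    rw [Nat.card_eq_fintype_card, Fintype.card_subtype]
    rfl
  set N : ℕ := (univ.filter fun x : GaloisField 2 m =>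
      x ≠ 0 ∧ (∃ z : GaloisField 2 m, z ≠ 0 ∧ z ^ 3 = x) ∧ tr m x = 0).card with hNdef
  rw [hN]
  set S : ℤ := ∑ x : GaloisField 2 m, e (tr m (x ^ 3)) with hSdef
  have hS_lin : S = 6 * (N : ℤ) + 2 - 2 ^ m := by
    rw [hSdef, S_eq m hm, T_split m hm]
    have := card_T' m hm hmeven
    push_cast [this]
    ring
  have hS_sq : S * S = 4 * 2 ^ m := S_sq m hm hmeven
  have hq4 : (2 : ℤ) ^ m = 4 ^ k := by
    rw [hk, pow_mul]; norm_num
  have hA : (2 : ℤ) ^ (k + 1) * (2 : ℤ) ^ (k + 1) = 4 * 2 ^ m := by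
    rw [hk, ← pow_add]
    rw [show k + 1 + (k + 1) = 2 * k + 2 by ring, pow_add]
    ring
  have hS_pm : S = 2 ^ (k + 1) ∨ S = -2 ^ (k + 1) := by
    have : S * S = 2 ^ (k + 1) * 2 ^ (k + 1) := by rw [hS_sq, hA]
    exact mul_self_eq_mul_self_iff.mp this
  have h3q : (3 : ℤ) ∣ 4 ^ k - 1 := by
    have h : (4 : ℤ) ^ k ≡ 1 ^ k [ZMOD 3] := Int.ModEq.pow k (by decide)
    simpa using (Int.ModEq.dvd h.symm)
  rcases Nat.even_or_odd (k + 1) with he | ho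
  · -- k+1 even : (-2)^(k+1) = 2^(k+1), and 3 ∣ 2^(k+1) - 1
    have hneg : (-2 : ℤ) ^ (k + 1) = 2 ^ (k + 1) := he.neg_pow 2
    obtain ⟨j, hj⟩ := he
    have h3A : (3 : ℤ) ∣ 2 ^ (k + 1) - 1 := by
      have : (2 : ℤ) ^ (k + 1) = 4 ^ j := by
        rw [hj, show j + j = 2 * j by ring, pow_mul]; norm_num
      rw [this]
      have h : (4 : ℤ) ^ j ≡ 1 ^ j [ZMOD 3] := Int.ModEq.pow j (by decide)
      simpa using (Int.ModEq.dvd h.symm)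
    rw [hneg]
    -- clean up to pure integer arithmetic
    set q : ℤ := (2 : ℤ) ^ m
    set A : ℤ := (2 : ℤ) ^ (k + 1)
    set Q4 : ℤ := (4 : ℤ) ^ k
    rcases hS_pm with h | h <;> omega
  · have hneg : (-2 : ℤ) ^ (k + 1) = -2 ^ (k + 1) := ho.neg_pow 2
    obtain ⟨j, hj⟩ := ho
    have h3A : (3 : ℤ) ∣ 2 ^ (k + 1) + 1 := by
      have h2A : (2 : ℤ) ^ (k + 1) = 2 * 4 ^ j := by
        rw [hj, pow_succ, pow_mul]; norm_num; ring
      rw [h2A]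
      obtain ⟨t, ht⟩ := (by
        have h : (4 : ℤ) ^ j ≡ 1 ^ j [ZMOD 3] := Int.ModEq.pow j (by decide)
        simpa using (Int.ModEq.dvd h.symm) : (3 : ℤ) ∣ 4 ^ j - 1)
      refine ⟨2 * t + 1, by linarith⟩
    rw [hneg]
    set q : ℤ := (2 : ℤ) ^ m
    set A : ℤ := (2 : ℤ) ^ (k + 1)
    set Q4 : ℤ := (4 : ℤ) ^ k
    rcases hS_pm with h | h <;> omega
end

section
/- Let q = 2^m with m ≥ 4, e a positive integer with gcd(m,e) = 1, and let x₁, x₂, x₃, x₄ be four distinct elements of GF(q). Set S₁ = x₁+x₂+x₃+x₄ and S = x₁^(2^e+1)+x₂^(2^e+1)+x₃^(2^e+1)+x₄^(2^e+1). Then the number N of pairs (x,y) ∈ GF(q)² with x + y = S₁, x^(2^e+1) + y^(2^e+1) = S, and {x₁,x₂,x₃,x₄,x,y} of size 6, satisfies: N = 2 if S₁ ≠ 0 and Tr_{q/2}(S/S₁^(2^e+1) + 1) = 0, and N = 0 otherwise. -/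
set_option linter.unusedSectionVars false
namespace Stmt10

variable {K : Type*} [Field K] [CharP K 2] [Finite K]

lemma two_eq_zero : (2 : K) = 0 := by
  have := CharP.cast_eq_zero K 2; exact_mod_cast this

lemma frob_add (x y : K) (n : ℕ) : (x + y) ^ 2 ^ n = x ^ 2 ^ n + y ^ 2 ^ n :=
  add_pow_char_pow ..

lemma pow_pow_add (x : K) (a b : ℕ) : x ^ 2 ^ (a + b) = (x ^ 2 ^ a) ^ 2 ^ b := by
  rw [pow_add, pow_mul]

lemma pow_reduce {m : ℕ} (hq : ∀ x : K, x ^ 2 ^ m = x) (x : K) (a : ℕ) :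
    x ^ 2 ^ a = x ^ 2 ^ (a % m) := by
  conv_lhs => rw [← Nat.div_add_mod a m]
  generalize a / m = k
  induction k with
  | zero => simp
  | succ n ih =>
      have : m * (n + 1) + a % m = m + (m * n + a % m) := by ring
      rw [this, pow_pow_add, hq, ih]

lemma kernel_lemma {m e : ℕ} (hm : 2 ≤ m) (hge : Nat.gcd m e = 1)
    (hq : ∀ x : K, x ^ 2 ^ m = x) {z : K} (hz : z ^ 2 ^ e = z) : z = 0 ∨ z = 1 := by
  have hk : ∀ k : ℕ, z ^ 2 ^ (k * e) = z := by
    intro k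
    induction k with
    | zero => simp
    | succ n ih => rw [Nat.succ_mul, pow_pow_add, ih, hz]
  have hcop : Nat.Coprime e m := Nat.Coprime.symm (by rwa [Nat.Coprime])
  have : NeZero m := ⟨by omega⟩
  obtain ⟨u, hu⟩ : ∃ u : (ZMod m)ˣ, (u : ZMod m) = (e : ZMod m) :=
    ⟨ZMod.unitOfCoprime e hcop, ZMod.coe_unitOfCoprime e hcop⟩
  set k : ℕ := ((u⁻¹ : (ZMod m)ˣ) : ZMod m).val with hkdef
  have hcast : ((k * e : ℕ) : ZMod m) = 1 := by
    push_cast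
    rw [hkdef, ZMod.natCast_val, ZMod.cast_id, ← hu, Units.inv_mul]
  have hmod : (k * e) % m = 1 % m := by
    rw [← ZMod.natCast_eq_natCast_iff'] ; rw [hcast]; simp
  have h1 : z ^ 2 ^ 1 = z := by
    have h := hk k
    rwa [pow_reduce hq, hmod, Nat.mod_eq_of_lt (by omega)] at h
  have hz2 : z * z = z := by linear_combination h1
  rcases mul_eq_zero.mp (show z * (z - 1) = 0 by linear_combination hz2) with h | h
  · exact Or.inl h
  · exact Or.inr (by linear_combination h)

lemma expand (α z : K) (e : ℕ) : (z + α) ^ (2 ^ e + 1)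
    = z ^ (2 ^ e + 1) + α * z ^ 2 ^ e + α ^ 2 ^ e * z + α ^ (2 ^ e + 1) := by
  rw [pow_add, pow_add, pow_add, frob_add]; ring

lemma apn {m e : ℕ} (hm : 2 ≤ m) (hge : Nat.gcd m e = 1) (hq : ∀ x : K, x ^ 2 ^ m = x)
    {a b c d : K} (hab : a ≠ b) (hbd : b ≠ d) (had : a ≠ d)
    (hsum : a + b + c + d = 0)
    (hpow : a ^ (2^e+1) + b ^ (2^e+1) + c ^ (2^e+1) + d ^ (2^e+1) = 0) : False := by
  have h2 : (2:K) = 0 := two_eq_zero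
  set α := a + b with hα
  have hαne : α ≠ 0 := fun h => hab (by linear_combination h - b*h2)
  have ha : a = b + α := by linear_combination -h2 * b
  have hc : c = d + α := by linear_combination hsum - (a+b+d)*h2
  have key : α * (b ^ 2^e + d ^ 2^e) + α ^ 2^e * (b + d) = 0 := by
    rw [ha, hc, expand α b e, expand α d e] at hpow
    linear_combination hpow - (b^(2^e+1)+d^(2^e+1)+α^(2^e+1))*h2
  have hwd : ((b+d)/α)^(2^e) = (b+d)/α := by
    rw [div_pow, div_eq_div_iff (pow_ne_zero _ hαne) hαne, frob_add]
    linear_combination key - α^(2^e)*(b+d)*h2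
  rcases kernel_lemma hm hge hq hwd with h|h
  · have hbd0 : b + d = 0 := by
      rcases div_eq_zero_iff.mp h with h'|h'
      · exact h'
      · exact absurd h' hαne
    exact hbd (by linear_combination hbd0 - d*h2)
  · have hbdα : b + d = α := by
      field_simp at h; exact h
    exact had (by linear_combination -hbdα - hα)

lemma four_distinct {m e : ℕ} (hm : 2 ≤ m) (hge : Nat.gcd m e = 1)
    (hq : ∀ x : K, x ^ 2 ^ m = x) {b c d v : K}
    (hbc : b ≠ c) (hbd : b ≠ d) (hcd : c ≠ d)
    (hv : v = b + c + d)
    (hvpow : v ^ (2^e+1) = b ^ (2^e+1) + c ^ (2^e+1) + d ^ (2^e+1)) : False := by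
  have h2 : (2:K) = 0 := two_eq_zero
  have hcv : c ≠ v := fun h => hbd (by linear_combination -hv - h - d*h2)
  have hbv : b ≠ v := fun h => hcd (by linear_combination -hv - h - d*h2)
  exact apn (a := b) (b := c) (c := d) (d := v) hm hge hq hbc hcv hbv
    (by linear_combination hv + (b+c+d)*h2)
    (by linear_combination hvpow + (b^(2^e+1)+c^(2^e+1)+d^(2^e+1))*h2)

section TraceSection
variable (K)
variable [Algebra (ZMod 2) K]

noncomputable def frobAE : K ≃ₐ[ZMod 2] K :=
  AlgEquiv.ofRingEquiv (f := frobeniusEquiv K 2)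
    (fun r => by
      show (algebraMap (ZMod 2) K r) ^ 2 = algebraMap (ZMod 2) K r
      rw [← map_pow]
      congr 1
      revert r; decide)

variable {K}

lemma trace_sq (x : K) :
    Algebra.trace (ZMod 2) K (x ^ 2) = Algebra.trace (ZMod 2) K x := by
  have h := Algebra.trace_eq_of_algEquiv (frobAE K) x
  have h2 : (frobAE K) x = x ^ 2 := rfl
  rwa [h2] at h

lemma trace_frob_pow (x : K) (n : ℕ) :
    Algebra.trace (ZMod 2) K (x ^ 2 ^ n) = Algebra.trace (ZMod 2) K x := by
  induction n with
  | zero => simp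
  | succ k ih => rw [pow_succ, pow_mul, trace_sq, ih]

noncomputable def Lhom (e : ℕ) : K →+ K where
  toFun t := t ^ 2 ^ e + t
  map_zero' := by simp
  map_add' x y := by
    show (x + y) ^ 2 ^ e + (x + y) = (x ^ 2 ^ e + x) + (y ^ 2 ^ e + y)
    rw [frob_add]; ring

lemma solv {m e : ℕ} (hm : 2 ≤ m) (hge : Nat.gcd m e = 1)
    (hq : ∀ x : K, x ^ 2 ^ m = x) (hcard : Nat.card K = 2 ^ m) (c : K)
    (htr : Algebra.trace (ZMod 2) K c = 0) : ∃ t : K, t ^ 2 ^ e + t = c := by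
  set T : K →+ ZMod 2 := (Algebra.trace (ZMod 2) K).toAddMonoidHom with hT
  set L : K →+ K := Lhom e with hL
  have hTsurj : Function.Surjective T := Algebra.trace_surjective (ZMod 2) K
  have hsub : (L.range : Set K) ⊆ (T.ker : Set K) := by
    rintro x ⟨t, rfl⟩
    show Algebra.trace (ZMod 2) K (t ^ 2 ^ e + t) = 0
    rw [map_add, trace_frob_pow]
    exact CharTwo.add_self_eq_zero _
  have hkerL : (L.ker : Set K) = {0, 1} := by
    ext z
    constructor
    · intro hz
      have hz' : z ^ 2 ^ e + z = 0 := hz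
      have : z ^ 2 ^ e = z := by
        linear_combination hz' - z * (two_eq_zero (K := K))
      exact kernel_lemma hm hge hq this
    · rintro (rfl | rfl)
      · exact L.map_zero
      · show (1:K) ^ 2 ^ e + 1 = 0
        rw [one_pow, one_add_one_eq_two]; exact two_eq_zero (K := K)
  have hckerL : Nat.card L.ker = 2 := by
    rw [← SetLike.coe_sort_coe, hkerL, Nat.card_coe_set_eq, Set.ncard_pair zero_ne_one]
  have e1 : Nat.card K = Nat.card (K ⧸ L.ker) * Nat.card L.ker :=
    AddSubgroup.card_eq_card_quotient_mul_card_addSubgroup L.ker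
  have e2 : Nat.card (K ⧸ L.ker) = Nat.card L.range :=
    Nat.card_congr (QuotientAddGroup.quotientKerEquivRange _).toEquiv
  have f1 : Nat.card (K ⧸ T.ker) = 2 := by
    have h := Nat.card_congr (QuotientAddGroup.quotientKerEquivRange T).toEquiv
    rw [h, AddMonoidHom.range_eq_top.mpr hTsurj]
    rw [Nat.card_congr AddSubgroup.topEquiv.toEquiv, Nat.card_zmod]
  have f2 : Nat.card K = Nat.card (K ⧸ T.ker) * Nat.card T.ker :=
    AddSubgroup.card_eq_card_quotient_mul_card_addSubgroup T.ker
  have hcards : Nat.card L.range = Nat.card T.ker := by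
    rw [e2, hckerL] at e1
    rw [f1] at f2
    have h := e1.symm.trans f2
    omega
  have hAB : (L.range : Set K) = (T.ker : Set K) := by
    apply Set.eq_of_subset_of_ncard_le hsub _ (Set.toFinite _)
    rw [← Nat.card_coe_set_eq, ← Nat.card_coe_set_eq, SetLike.coe_sort_coe,
      SetLike.coe_sort_coe, hcards]
  have hc : c ∈ (L.range : Set K) := by
    rw [hAB]
    exact htr
  obtain ⟨t, ht⟩ := hc
  exact ⟨t, ht⟩

lemma other_sol {e : ℕ} {c t₀ : K} (h₀ : t₀ ^ 2 ^ e + t₀ = c) :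
    (t₀ + 1) ^ 2 ^ e + (t₀ + 1) = c := by
  rw [frob_add, one_pow]
  linear_combination h₀ + two_eq_zero (K := K)

lemma sol_cases {m e : ℕ} (hm : 2 ≤ m) (hge : Nat.gcd m e = 1)
    (hq : ∀ x : K, x ^ 2 ^ m = x) {c t₀ t : K}
    (h₀ : t₀ ^ 2 ^ e + t₀ = c) (h : t ^ 2 ^ e + t = c) : t = t₀ ∨ t = t₀ + 1 := by
  have h2 : (2:K) = 0 := two_eq_zero
  have hk : (t + t₀) ^ 2 ^ e = t + t₀ := by
    rw [frob_add]
    linear_combination h - h₀ + (t₀ ^ (2^e) - t) * h2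
  rcases kernel_lemma hm hge hq hk with h' | h'
  · exact Or.inl (by linear_combination h' - t₀ * h2)
  · exact Or.inr (by linear_combination h' - t₀ * h2)

end TraceSection

end Stmt10

section NcardHelpers
variable {α : Type*} [Finite α]

lemma ncard3_le (x y z : α) : ({x, y, z} : Set α).ncard ≤ 3 := by
  have h1 := Set.ncard_insert_le x ({y, z} : Set α)
  have h2 := Set.ncard_insert_le y ({z} : Set α)
  have h3 : ({z} : Set α).ncard = 1 := Set.ncard_singleton z
  omega

lemma ncard5_le (x y z w u : α) : ({x, y, z, w, u} : Set α).ncard ≤ 5 := by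
  have h1 := Set.ncard_insert_le x ({y, z, w, u} : Set α)
  have h2 := Set.ncard_insert_le y ({z, w, u} : Set α)
  have h3 := Set.ncard_insert_le z ({w, u} : Set α)
  have h4 := Set.ncard_insert_le w ({u} : Set α)
  have h5 : ({u} : Set α).ncard = 1 := Set.ncard_singleton u
  omega

lemma ncard_ne4 {x y z : α} (s : Set α) (hs : s = {x, y, z}) : s.ncard ≠ 4 := by
  rw [hs]; have := ncard3_le x y z; omega

lemma ncard4_distinct {a b c d : α} (h : ({a, b, c, d} : Set α).ncard = 4) :
    a ≠ b ∧ a ≠ c ∧ a ≠ d ∧ b ≠ c ∧ b ≠ d ∧ c ≠ d := by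
  refine ⟨?_, ?_, ?_, ?_, ?_, ?_⟩ <;> rintro rfl
  · exact absurd h (ncard_ne4 (x := a) (y := c) (z := d) _ (by ext t; simp; try tauto))
  · exact absurd h (ncard_ne4 (x := a) (y := b) (z := d) _ (by ext t; simp; try tauto))
  · exact absurd h (ncard_ne4 (x := a) (y := b) (z := c) _ (by ext t; simp; try tauto))
  · exact absurd h (ncard_ne4 (x := a) (y := b) (z := d) _ (by ext t; simp; try tauto))
  · exact absurd h (ncard_ne4 (x := a) (y := b) (z := c) _ (by ext t; simp; try tauto))
  · exact absurd h (ncard_ne4 (x := a) (y := b) (z := c) _ (by ext t; simp; try tauto))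

lemma ncard_six {a b c d u v : α} (hab : a ≠ b) (hac : a ≠ c) (had : a ≠ d) (hau : a ≠ u)
    (hav : a ≠ v) (hbc : b ≠ c) (hbd : b ≠ d) (hbu : b ≠ u) (hbv : b ≠ v) (hcd : c ≠ d)
    (hcu : c ≠ u) (hcv : c ≠ v) (hdu : d ≠ u) (hdv : d ≠ v) (huv : u ≠ v) :
    ({a, b, c, d, u, v} : Set α).ncard = 6 := by
  rw [Set.ncard_insert_of_notMem (by simp [hab, hac, had, hau, hav]),
    Set.ncard_insert_of_notMem (by simp [hbc, hbd, hbu, hbv]),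
    Set.ncard_insert_of_notMem (by simp [hcd, hcu, hcv]),
    Set.ncard_insert_of_notMem (by simp [hdu, hdv]),
    Set.ncard_pair huv]

end NcardHelpers

lemma gf_pow (m : ℕ) (hm : m ≠ 0) : ∀ x : GaloisField 2 m, x ^ 2 ^ m = x := by
  intro x
  cases nonempty_fintype (GaloisField 2 m)
  have h := FiniteField.pow_card x
  rwa [← Nat.card_eq_fintype_card, GaloisField.card 2 m hm] at h

lemma bridge {K : Type*} [Field K] [CharP K 2] [Finite K] {S1 S u v : K} (e : ℕ)
    (hS1 : S1 ≠ 0) (huv : u + v = S1) :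
    (u ^ (2^e+1) + v ^ (2^e+1) = S) ↔ ((u/S1) ^ 2^e + u/S1 = S/S1^(2^e+1) + 1) := by
  have h2 : (2:K) = 0 := Stmt10.two_eq_zero
  have hv : v = u + S1 := by linear_combination huv - u*h2
  subst hv
  rw [Stmt10.expand S1 u e]
  have hne : S1 ^ (2^e+1) ≠ 0 := pow_ne_zero _ hS1
  constructor
  · intro h
    rw [div_pow]
    field_simp
    linear_combination S1^(2^e+1)*h - S1^(2^e+1)*(u^(2^e+1)+S1^(2^e+1))*h2
  · intro h
    rw [div_pow] at h
    field_simp at h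
    apply mul_left_cancel₀ hne
    linear_combination h + S1^(2^e+1)*(u^(2^e+1)+S1^(2^e+1))*h2

open Stmt10 in
theorem stmt_10 (m e : ℕ) (hm : 4 ≤ m) (he : 1 ≤ e) (hge : Nat.gcd m e = 1)
    (x₁ x₂ x₃ x₄ : GaloisField 2 m)
    (hdist : ({x₁, x₂, x₃, x₄} : Set (GaloisField 2 m)).ncard = 4)
    (S1 S : GaloisField 2 m)
    (hS1 : S1 = x₁ + x₂ + x₃ + x₄)
    (hS : S = x₁ ^ (2 ^ e + 1) + x₂ ^ (2 ^ e + 1) + x₃ ^ (2 ^ e + 1) + x₄ ^ (2 ^ e + 1)) :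
    (S1 ≠ 0 ∧ Algebra.trace (ZMod 2) (GaloisField 2 m) (S / S1 ^ (2 ^ e + 1) + 1) = 0 →
      Nat.card {xy : GaloisField 2 m × GaloisField 2 m //
        xy.1 + xy.2 = S1 ∧ xy.1 ^ (2 ^ e + 1) + xy.2 ^ (2 ^ e + 1) = S ∧
          ({x₁, x₂, x₃, x₄, xy.1, xy.2} : Set (GaloisField 2 m)).ncard = 6} = 2) ∧
    (¬(S1 ≠ 0 ∧ Algebra.trace (ZMod 2) (GaloisField 2 m) (S / S1 ^ (2 ^ e + 1) + 1) = 0) →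
      Nat.card {xy : GaloisField 2 m × GaloisField 2 m //
        xy.1 + xy.2 = S1 ∧ xy.1 ^ (2 ^ e + 1) + xy.2 ^ (2 ^ e + 1) = S ∧
          ({x₁, x₂, x₃, x₄, xy.1, xy.2} : Set (GaloisField 2 m)).ncard = 6} = 0) := by
  have hm0 : m ≠ 0 := by omega
  have hm2 : 2 ≤ m := by omega
  have hq := gf_pow m hm0
  have hcard : Nat.card (GaloisField 2 m) = 2 ^ m := GaloisField.card 2 m hm0
  have h2 : (2 : GaloisField 2 m) = 0 := Stmt10.two_eq_zero
  obtain ⟨h12, h13, h14, h23, h24, h34⟩ := ncard4_distinct hdist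
  have notmem : ∀ u v : GaloisField 2 m, u + v = S1 → u ^ (2^e+1) + v ^ (2^e+1) = S →
      u ≠ x₁ ∧ u ≠ x₂ ∧ u ≠ x₃ ∧ u ≠ x₄ := by
    intro u v huv hp
    refine ⟨?_, ?_, ?_, ?_⟩ <;> rintro rfl
    · exact four_distinct (v := v) hm2 hge hq h23 h24 h34
        (by linear_combination huv + hS1) (by linear_combination hp + hS)
    · exact four_distinct (v := v) hm2 hge hq h13 h14 h34
        (by linear_combination huv + hS1) (by linear_combination hp + hS)
    · exact four_distinct (v := v) hm2 hge hq h12 h14 h24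
        (by linear_combination huv + hS1) (by linear_combination hp + hS)
    · exact four_distinct (v := v) hm2 hge hq h12 h13 h23
        (by linear_combination huv + hS1) (by linear_combination hp + hS)
  constructor
  · rintro ⟨hS1ne, htr⟩
    obtain ⟨t₀, ht₀⟩ := Stmt10.solv hm2 hge hq hcard _ htr
    obtain ⟨x, hx⟩ : ∃ x, x = S1 * t₀ := ⟨_, rfl⟩
    obtain ⟨y, hy⟩ : ∃ y, y = x + S1 := ⟨_, rfl⟩
    have hxyS1 : x + y = S1 := by linear_combination hy + x*h2
    have hxyne : x ≠ y := fun hh => hS1ne (by linear_combination -hy - hh)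
    have htx : (x / S1) ^ 2^e + x/S1 = S/S1^(2^e+1) + 1 := by
      rw [hx, mul_div_cancel_left₀ _ hS1ne]
      exact ht₀
    have hpowS : x ^ (2^e+1) + y ^ (2^e+1) = S := (bridge e hS1ne hxyS1).mpr htx
    have hxnm := notmem x y hxyS1 hpowS
    have hynm := notmem y x (by linear_combination hxyS1) (by linear_combination hpowS)
    have hseteq : {xy : GaloisField 2 m × GaloisField 2 m |
        xy.1 + xy.2 = S1 ∧ xy.1 ^ (2^e+1) + xy.2 ^ (2^e+1) = S ∧
          ({x₁, x₂, x₃, x₄, xy.1, xy.2} : Set (GaloisField 2 m)).ncard = 6}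
        = {(x, y), (y, x)} := by
      ext ⟨u, v⟩
      simp only [Set.mem_setOf_eq, Set.mem_insert_iff, Set.mem_singleton_iff, Prod.mk.injEq]
      constructor
      · rintro ⟨huv, hup, -⟩
        have htu := (bridge e hS1ne huv).mp hup
        have hvu : v = u + S1 := by linear_combination huv - u*h2
        rcases Stmt10.sol_cases hm2 hge hq ht₀ htu with hh | hh
        · left
          have hux : u = x := by
            rw [hx]
            field_simp at hh
            linear_combination hh
          exact ⟨hux, by linear_combination hvu + hux - hy⟩
        · right
          have hux : u = y := by
            rw [hy, hx]
            field_simp at hh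
            linear_combination hh
          exact ⟨hux, by linear_combination hvu + hux + hy + S1*h2⟩
      · rintro (⟨rfl, rfl⟩ | ⟨rfl, rfl⟩)
        · exact ⟨hxyS1, hpowS,
            ncard_six h12 h13 h14 (Ne.symm hxnm.1) (Ne.symm hynm.1) h23 h24
              (Ne.symm hxnm.2.1) (Ne.symm hynm.2.1) h34 (Ne.symm hxnm.2.2.1)
              (Ne.symm hynm.2.2.1) (Ne.symm hxnm.2.2.2) (Ne.symm hynm.2.2.2) hxyne⟩
        · exact ⟨by linear_combination hxyS1, by linear_combination hpowS,
            ncard_six h12 h13 h14 (Ne.symm hynm.1) (Ne.symm hxnm.1) h23 h24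
              (Ne.symm hynm.2.1) (Ne.symm hxnm.2.1) h34 (Ne.symm hynm.2.2.1)
              (Ne.symm hxnm.2.2.1) (Ne.symm hynm.2.2.2) (Ne.symm hxnm.2.2.2) hxyne.symm⟩
    have hcc : Nat.card {xy : GaloisField 2 m × GaloisField 2 m //
        xy.1 + xy.2 = S1 ∧ xy.1 ^ (2^e+1) + xy.2 ^ (2^e+1) = S ∧
          ({x₁, x₂, x₃, x₄, xy.1, xy.2} : Set (GaloisField 2 m)).ncard = 6}
        = ({((x : GaloisField 2 m), y), (y, x)} : Set (GaloisField 2 m × GaloisField 2 m)).ncard := by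
      rw [← hseteq]
      exact Nat.card_coe_set_eq _
    rw [hcc, Set.ncard_pair (fun hh => hxyne (congrArg Prod.fst hh))]
  · intro hneg
    have hempty : IsEmpty {xy : GaloisField 2 m × GaloisField 2 m //
        xy.1 + xy.2 = S1 ∧ xy.1 ^ (2^e+1) + xy.2 ^ (2^e+1) = S ∧
          ({x₁, x₂, x₃, x₄, xy.1, xy.2} : Set (GaloisField 2 m)).ncard = 6} := by
      constructor
      rintro ⟨⟨u, v⟩, huv, hup, h6⟩
      by_cases hS1z : S1 = 0
      · have hvu : v = u := by linear_combination huv + hS1z - u*h2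
        rw [hvu] at h6
        rw [show ({x₁, x₂, x₃, x₄, u, u} : Set (GaloisField 2 m)) = {x₁, x₂, x₃, x₄, u} by
          rw [Set.pair_eq_singleton]] at h6
        have := ncard5_le x₁ x₂ x₃ x₄ u
        omega
      · have htrne : Algebra.trace (ZMod 2) (GaloisField 2 m) (S / S1^(2^e+1) + 1) ≠ 0 :=
          fun hzz => hneg ⟨hS1z, hzz⟩
        have htu := (bridge e hS1z huv).mp hup
        apply htrne
        rw [← htu, map_add, Stmt10.trace_frob_pow]
        exact CharTwo.add_self_eq_zero _
    exact Nat.card_of_isEmpty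
end

section
/- Let q = 2^m with m ≥ 5 odd, and let C be a binary linear code of length 2^m and dimension 2m+1 whose nonzero weights are exactly 2^(m−1) − 2^((m−1)/2) (with multiplicity (2^m−1)·2^(m−1)), 2^(m−1) (with multiplicity (2^m−1)·(2^(m+1)−2^m+2)), 2^(m−1)+2^((m−1)/2) (with multiplicity (2^m−1)·2^(m−1)), and 2^m (with multiplicity 1). Then the dual code C⊥ has parameters [2^m, 2^m − 2m − 1, 6], i.e., C⊥ has minimum distance exactly 6. -/
open Finset

/-- Hamming weight of a word. -/
noncomputable def wt {K : Type*} [Field K] {ι : Type*} [Fintype ι] (c : ι → K) : ℕ :=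
  Nat.card {i : ι // c i ≠ 0}

/-- The linear functional `v ↦ ∑ i, v i * c i`. -/
noncomputable def dotL {K : Type*} [Field K] {ι : Type*} [Fintype ι] (c : ι → K) :
    (ι → K) →ₗ[K] K where
  toFun v := ∑ i, v i * c i
  map_add' u v := by simp [add_mul, Finset.sum_add_distrib]
  map_smul' r v := by simp [Finset.mul_sum, mul_assoc]

/-- The dual code of a linear code. -/
noncomputable def dualCode {K : Type*} [Field K] {ι : Type*} [Fintype ι]
    (C : Submodule K (ι → K)) : Submodule K (ι → K) :=
  ⨅ c ∈ C, LinearMap.ker (dotL c)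

/-- The punctured code of `C` on `T`. -/
noncomputable def punctureCode {K : Type*} [Field K] {ι : Type*}
    (C : Submodule K (ι → K)) (T : Finset ι) :
    Submodule K ({i : ι // i ∉ T} → K) :=
  C.map (LinearMap.funLeft K K Subtype.val)

/-- The shortened code of `C` on `T`. -/
noncomputable def shortenCode {K : Type*} [Field K] {ι : Type*}
    (C : Submodule K (ι → K)) (T : Finset ι) :
    Submodule K ({i : ι // i ∉ T} → K) :=
  (C ⊓ ⨅ i ∈ T, LinearMap.ker (LinearMap.proj i)).map
    (LinearMap.funLeft K K Subtype.val)

/-- The number of codewords of weight `w` in a code. -/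
noncomputable def numwt {K : Type*} [Field K] {ι : Type*} [Fintype ι]
    (C : Submodule K (ι → K)) (w : ℕ) : ℕ :=
  Nat.card {c : C // wt (c : ι → K) = w}

section DualDim
variable {K : Type*} [Field K] {ι : Type*} [Fintype ι]

lemma mem_dualCode {C : Submodule K (ι → K)} {v : ι → K} :
    v ∈ dualCode C ↔ ∀ c ∈ C, ∑ i, v i * c i = 0 := by
  simp [dualCode, dotL]

noncomputable def psiL : (ι → K) →ₗ[K] Module.Dual K (ι → K) where
  toFun c := dotL c
  map_add' u v := by ext w; simp [dotL, mul_add, Finset.sum_add_distrib]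
  map_smul' r v := by ext w; simp [dotL, Finset.mul_sum]; ring_nf; simp [mul_assoc, mul_comm, mul_left_comm]

lemma psiL_inj : Function.Injective (psiL (K := K) (ι := ι)) := by
  classical
  rw [injective_iff_map_eq_zero]
  intro c hc
  funext i
  have := congrArg (fun φ => φ (Pi.single i 1)) hc
  simpa [psiL, dotL, Pi.single_apply] using this

lemma dualCode_eq_comap (C : Submodule K (ι → K)) :
    dualCode C = C.dualAnnihilator.comap psiL := by
  ext v
  simp only [Submodule.mem_comap, Submodule.mem_dualAnnihilator, mem_dualCode]
  constructor
  · intro h c hc; simpa [psiL, dotL, mul_comm] using h c hc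
  · intro h c hc; simpa [psiL, dotL, mul_comm] using h c hc

lemma finrank_dualCode_add (C : Submodule K (ι → K)) :
    Module.finrank K (dualCode C) + Module.finrank K C = Fintype.card ι := by
  classical
  let e : (ι → K) ≃ₗ[K] Module.Dual K (ι → K) :=
    LinearMap.linearEquivOfInjective psiL psiL_inj (Subspace.dual_finrank_eq (K := K) (V := ι → K)).symm
  have he : (e : (ι → K) →ₗ[K] Module.Dual K (ι → K)) = psiL := rfl
  have h1 : dualCode C = C.dualAnnihilator.comap (e : (ι → K) →ₗ[K] _) := by
    rw [he]; exact dualCode_eq_comap C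
  have h2 : Module.finrank K (dualCode C) = Module.finrank K C.dualAnnihilator := by
    rw [h1, Submodule.comap_equiv_eq_map_symm]
    exact (LinearEquiv.finrank_map_eq _ _)
  have h3 : Module.finrank K ((ι→K) ⧸ C) = Module.finrank K C.dualAnnihilator :=
    LinearEquiv.finrank_eq (Subspace.quotEquivAnnihilator C)
  have h4 := Submodule.finrank_quotient_add_finrank C
  rw [h2, ← h3, h4, Module.finrank_pi]

end DualDim

lemma card_mod (V : Type*) [AddCommGroup V] [Module (ZMod 2) V] [Finite V] :
    Nat.card V = 2 ^ Module.finrank (ZMod 2) V := by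
  have : Fintype V := Fintype.ofFinite V
  rw [Nat.card_eq_fintype_card]
  have h := Module.card_eq_pow_finrank (K := ZMod 2) (V := V)
  simpa using h

section CountT
variable {ι : Type*} [Fintype ι] [DecidableEq ι]

abbrev resL (T : Finset ι) : (ι → ZMod 2) →ₗ[ZMod 2] ({i : ι // i ∈ T} → ZMod 2) :=
  LinearMap.funLeft (ZMod 2) (ZMod 2) Subtype.val

lemma sum_eq_sub {T : Finset ι} (v c : ι → ZMod 2) (hv : ∀ i ∉ T, v i = 0) :
    ∑ i, v i * c i = ∑ i : {i : ι // i ∈ T}, v i * c i := by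
  have h1 : ∑ i, v i * c i = ∑ i ∈ T, v i * c i := by
    symm
    apply Finset.sum_subset (Finset.subset_univ T)
    intro x _ hx
    rw [hv x hx, zero_mul]
  rw [h1, ← Finset.sum_attach T (fun i => v i * c i), Finset.univ_eq_attach]

lemma count_T (C : Submodule (ZMod 2) (ι → ZMod 2)) (T : Finset ι) :
    Nat.card {v : ι → ZMod 2 // v ∈ dualCode C ∧ ∀ i ∉ T, v i = 0} * Nat.card C =
    2 ^ T.card * Nat.card {c : ι → ZMod 2 // c ∈ C ∧ ∀ i ∈ T, c i = 0} := by
  classical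
  set r : C →ₗ[ZMod 2] ({i : ι // i ∈ T} → ZMod 2) := (resL T).comp C.subtype with hr
  set D := LinearMap.range r with hD
  -- kernel equivalence
  have e1 : {c : ι → ZMod 2 // c ∈ C ∧ ∀ i ∈ T, c i = 0} ≃ LinearMap.ker r := by
    refine ⟨fun c => ⟨⟨c.1, c.2.1⟩, ?_⟩, fun x => ⟨x.1.1, x.1.2, ?_⟩, fun c => rfl, fun x => rfl⟩
    · simp only [LinearMap.mem_ker]
      funext i
      exact c.2.2 i.1 i.2
    · intro i hi
      have := congrFun x.2 ⟨i, hi⟩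
      exact this
  -- dual equivalence
  have e2 : {v : ι → ZMod 2 // v ∈ dualCode C ∧ ∀ i ∉ T, v i = 0} ≃ dualCode D := by
    refine ⟨fun v => ⟨resL T v.1, ?_⟩,
           fun w => ⟨fun i => if h : i ∈ T then w.1 ⟨i, h⟩ else 0, ?_, ?_⟩, ?_, ?_⟩
    · rw [mem_dualCode]
      rintro d ⟨c, rfl⟩
      have h1 : ∑ i : {i : ι // i ∈ T}, (resL T v.1) i * (r c) i
          = ∑ i : {i : ι // i ∈ T}, v.1 i * c.1 i := rfl
      rw [h1, ← sum_eq_sub v.1 c.1 v.2.2]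
      exact (mem_dualCode.mp v.2.1) c.1 c.2
    · rw [mem_dualCode]
      intro c hc
      have h2 : ∑ i, (fun i => if h : i ∈ T then w.1 ⟨i, h⟩ else 0) i * c i
          = ∑ i : {i : ι // i ∈ T}, w.1 i * (resL T c) i := by
        rw [sum_eq_sub _ c (fun i hi => dif_neg hi)]
        apply Finset.sum_congr rfl
        intro i _
        simp [dif_pos i.2, resL, LinearMap.funLeft]
      rw [h2]
      exact (mem_dualCode.mp w.2) (resL T c) ⟨⟨c, hc⟩, rfl⟩
    · intro i hi; exact dif_neg hi
    · intro v
      ext i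
      by_cases h : i ∈ T
      · simp [resL, LinearMap.funLeft, dif_pos h]
      · simp [dif_neg h, (v.2.2 i h).symm]
    · intro w
      ext i
      simp [resL, LinearMap.funLeft, dif_pos i.2]
  -- cardinalities
  have hk := LinearMap.finrank_range_add_finrank_ker r
  have hd := finrank_dualCode_add D
  rw [Fintype.card_coe] at hd
  rw [Nat.card_congr e1, Nat.card_congr e2, card_mod (dualCode D), card_mod C,
    card_mod (LinearMap.ker r), ← pow_add, ← pow_add]
  rw [← hD] at hk
  congr 1
  omega

lemma wt_le_card (c : ι → ZMod 2) : wt c ≤ Fintype.card ι := by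
  rw [wt, Nat.card_eq_fintype_card]
  exact Fintype.card_subtype_le _

lemma wt_eq_filter_card (c : ι → ZMod 2) :
    wt c = (Finset.univ.filter (fun i => c i ≠ 0)).card := by
  classical
  rw [wt, Nat.card_eq_fintype_card, Fintype.card_subtype]

lemma wt_eq_zero_iff (c : ι → ZMod 2) : wt c = 0 ↔ c = 0 := by
  classical
  rw [wt_eq_filter_card]
  rw [Finset.card_eq_zero, Finset.filter_eq_empty_iff]
  constructor
  · intro h; funext i; simpa using h (Finset.mem_univ i)
  · intro h i _; rw [h]; simp

lemma wt_le_of_supp_subset {c : ι → ZMod 2} {T : Finset ι} (h : ∀ i ∉ T, c i = 0) :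
    wt c ≤ T.card := by
  classical
  rw [wt_eq_filter_card]
  apply Finset.card_le_card
  intro i hi
  simp only [Finset.mem_filter] at hi
  by_contra hiT
  exact hi.2 (h i hiT)

noncomputable instance instFintypeSubmodule (C : Submodule (ZMod 2) (ι → ZMod 2)) :
    Fintype C := Fintype.ofFinite _

lemma double_count (C : Submodule (ZMod 2) (ι → ZMod 2)) (t : ℕ) :
    ∑ T ∈ Finset.powersetCard t (Finset.univ : Finset ι),
      Nat.card {c : ι → ZMod 2 // c ∈ C ∧ ∀ i ∈ T, c i = 0}
    = ∑ c : C, (Fintype.card ι - wt (c : ι → ZMod 2)).choose t := by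
  classical
  have step1 : ∀ T : Finset ι,
      Nat.card {c : ι → ZMod 2 // c ∈ C ∧ ∀ i ∈ T, c i = 0}
      = (Finset.univ.filter (fun c : C => ∀ i ∈ T, (c : ι → ZMod 2) i = 0)).card := by
    intro T
    rw [← Fintype.card_subtype, ← Nat.card_eq_fintype_card]
    apply Nat.card_congr
    exact ⟨fun c => ⟨⟨c.1, c.2.1⟩, c.2.2⟩, fun c => ⟨c.1.1, c.1.2, c.2⟩,
      fun c => rfl, fun c => rfl⟩
  simp only [step1, Finset.card_filter]
  rw [Finset.sum_comm]
  apply Finset.sum_congr rfl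
  intro c _
  have h2 : ∀ T : Finset ι, ((∀ i ∈ T, (c : ι → ZMod 2) i = 0) ↔
      T ⊆ Finset.univ.filter (fun i => (c : ι → ZMod 2) i = 0)) := by
    intro T
    constructor
    · intro h i hi; simp only [Finset.mem_filter, Finset.mem_univ, true_and]; exact h i hi
    · intro h i hi; have := h hi; simp only [Finset.mem_filter] at this; exact this.2
  calc ∑ T ∈ Finset.powersetCard t Finset.univ,
        (if ∀ i ∈ T, (c : ι → ZMod 2) i = 0 then 1 else 0)
      = ((Finset.powersetCard t (Finset.univ : Finset ι)).filter
          (fun T => T ⊆ Finset.univ.filter (fun i => (c : ι → ZMod 2) i = 0))).card := by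
        rw [Finset.card_filter]
        apply Finset.sum_congr rfl
        intro T _
        simp only [h2 T]
    _ = (Finset.powersetCard t (Finset.univ.filter
          (fun i => (c : ι → ZMod 2) i = 0))).card := by
        congr 1
        ext T
        simp only [Finset.mem_filter, Finset.mem_powersetCard, Finset.subset_univ, true_and]
        tauto
    _ = (Fintype.card ι - wt (c : ι → ZMod 2)).choose t := by
        rw [Finset.card_powersetCard]
        congr 1
        have := Finset.card_filter_add_card_filter_not
          (s := (Finset.univ : Finset ι)) (p := fun i => (c : ι → ZMod 2) i = 0)
        rw [wt_eq_filter_card]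
        simp only [Finset.card_univ] at this ⊢
        have hne : (Finset.univ.filter (fun i => ¬ (c : ι → ZMod 2) i = 0)).card
            = (Finset.univ.filter (fun i => (c : ι → ZMod 2) i ≠ 0)).card := rfl
        omega

lemma numwt_eq_filter (C : Submodule (ZMod 2) (ι → ZMod 2)) (w : ℕ) :
    numwt C w = (Finset.univ.filter (fun c : C => wt (c : ι → ZMod 2) = w)).card := by
  classical
  rw [numwt, ← Fintype.card_subtype, Nat.card_eq_fintype_card]

lemma numwt_zero (C : Submodule (ZMod 2) (ι → ZMod 2)) : numwt C 0 = 1 := by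
  classical
  rw [numwt_eq_filter]
  rw [Finset.card_eq_one]
  refine ⟨0, ?_⟩
  ext c
  simp only [Finset.mem_filter, Finset.mem_univ, true_and, Finset.mem_singleton]
  rw [wt_eq_zero_iff]
  constructor
  · intro h; exact Subtype.ext h
  · intro h; rw [h]; rfl

lemma sum_wt_group (C : Submodule (ZMod 2) (ι → ZMod 2)) (f : ℕ → ℕ) :
    ∑ c : C, f (wt (c : ι → ZMod 2))
    = ∑ w ∈ Finset.range (Fintype.card ι + 1), numwt C w * f w := by
  classical
  rw [← Finset.sum_fiberwise_of_maps_to (g := fun c : C => wt (c : ι → ZMod 2))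
    (t := Finset.range (Fintype.card ι + 1))
    (fun c _ => Finset.mem_range.mpr (Nat.lt_succ_of_le (wt_le_card _)))]
  apply Finset.sum_congr rfl
  intro w _
  rw [numwt_eq_filter]
  rw [Finset.sum_congr rfl (fun c hc => by
    rw [(Finset.mem_filter.mp hc).2])]
  simp [mul_comm]

end CountT

lemma descInt5 (a : ℕ) (h : 4 ≤ a) : ((a.choose 5 : ℤ)) * 120 =
    (a:ℤ)*((a:ℤ)-1)*((a:ℤ)-2)*((a:ℤ)-3)*((a:ℤ)-4) := by
  have hd : a.descFactorial 5 = (a-4)*((a-3)*((a-2)*((a-1)*((a-0)*1)))) := rfl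
  have h2 : a.descFactorial 5 = 120 * a.choose 5 := by
    rw [Nat.descFactorial_eq_factorial_mul_choose]; norm_num [Nat.factorial]
  have := congrArg (fun x : ℕ => (x : ℤ)) (h2.symm.trans hd)
  push_cast [Nat.cast_sub (by omega : 4 ≤ a), Nat.cast_sub (by omega : 3 ≤ a),
    Nat.cast_sub (by omega : 2 ≤ a), Nat.cast_sub (by omega : 1 ≤ a),
    Nat.sub_zero] at this
  linear_combination this

lemma descInt6 (a : ℕ) (h : 5 ≤ a) : ((a.choose 6 : ℤ)) * 720 =
    (a:ℤ)*((a:ℤ)-1)*((a:ℤ)-2)*((a:ℤ)-3)*((a:ℤ)-4)*((a:ℤ)-5) := by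
  have hd : a.descFactorial 6 = (a-5)*((a-4)*((a-3)*((a-2)*((a-1)*((a-0)*1))))) := rfl
  have h2 : a.descFactorial 6 = 720 * a.choose 6 := by
    rw [Nat.descFactorial_eq_factorial_mul_choose]; norm_num [Nat.factorial]
  have := congrArg (fun x : ℕ => (x : ℤ)) (h2.symm.trans hd)
  push_cast [Nat.cast_sub (by omega : 5 ≤ a), Nat.cast_sub (by omega : 4 ≤ a),
    Nat.cast_sub (by omega : 3 ≤ a),
    Nat.cast_sub (by omega : 2 ≤ a), Nat.cast_sub (by omega : 1 ≤ a),
    Nat.sub_zero] at this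
  linear_combination this

lemma sub_facts (s : ℕ) (hs : 4 ≤ s) : s ≤ s^2 ∧ 5 ≤ 2*s^2 ∧ 5 ≤ s^2+s ∧ 5 ≤ s^2 ∧
    5 ≤ s^2 - s ∧ 1 ≤ 2*s^2 := by
  have h := Nat.mul_le_mul_right s hs
  have h2 : s^2 = s*s := sq s
  omega

lemma ident5 (s : ℕ) (hs : 4 ≤ s) :
    32 * ((2*s^2).choose 5 + ((2*s^2-1)*s^2) * ((s^2+s).choose 5)
      + ((2*s^2-1)*(2*s^2+2)) * ((s^2).choose 5) + ((2*s^2-1)*s^2) * ((s^2-s).choose 5))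
    = 2*(2*s^2)^2 * ((2*s^2).choose 5) := by
  obtain ⟨hss, h1, h2, h3, h4, h01⟩ := sub_facts s hs
  have e1 := descInt5 (2*s^2) (by omega)
  have e2 := descInt5 (s^2+s) (by omega)
  have e3 := descInt5 (s^2) (by omega)
  have e4 := descInt5 (s^2-s) (by omega)
  push_cast [Nat.cast_sub hss] at e1 e2 e3 e4
  zify [hss, h01]
  apply mul_left_cancel₀ (show (120:ℤ) ≠ 0 by norm_num)
  linear_combination (32 - 2*(2*(s:ℤ)^2)^2) * e1
    + 32*((2*(s:ℤ)^2-1)*(s:ℤ)^2)*(e2+e4)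
    + 32*((2*(s:ℤ)^2-1)*(2*(s:ℤ)^2+2))*e3

lemma ident6 (s : ℕ) (hs : 4 ≤ s) :
    2*(2*s^2)^2 * ((2*s^2).choose 6)
    < 64 * ((2*s^2).choose 6 + ((2*s^2-1)*s^2) * ((s^2+s).choose 6)
      + ((2*s^2-1)*(2*s^2+2)) * ((s^2).choose 6) + ((2*s^2-1)*s^2) * ((s^2-s).choose 6)) := by
  obtain ⟨hss, h1, h2, h3, h4, h01⟩ := sub_facts s hs
  have e1 := descInt6 (2*s^2) (by omega)
  have e2 := descInt6 (s^2+s) (by omega)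
  have e3 := descInt6 (s^2) (by omega)
  have e4 := descInt6 (s^2-s) (by omega)
  push_cast [Nat.cast_sub hss] at e1 e2 e3 e4
  zify [hss, h01]
  have key : 720 * (64 * (((2*s^2).choose 6 : ℤ) + ((2*(s:ℤ)^2-1)*(s:ℤ)^2) * (((s^2+s).choose 6 : ℤ))
      + ((2*(s:ℤ)^2-1)*(2*(s:ℤ)^2+2)) * (((s^2).choose 6 : ℤ)) + ((2*(s:ℤ)^2-1)*(s:ℤ)^2) * (((s^2-s).choose 6 : ℤ))))
      = 720 * (2*(2*(s:ℤ)^2)^2 * (((2*s^2).choose 6 : ℤ)))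
        + 64 * (s:ℤ)^6 * ((s:ℤ)^2-4) * (2*(s:ℤ)^2-1) * ((s:ℤ)^2-1) := by
    push_cast [Nat.cast_sub hss]
    linear_combination (64 - 2*(2*(s:ℤ)^2)^2) * e1
      + 64*((2*(s:ℤ)^2-1)*(s:ℤ)^2)*(e2+e4)
      + 64*((2*(s:ℤ)^2-1)*(2*(s:ℤ)^2+2))*e3
  have hsz : (4:ℤ) ≤ (s:ℤ) := by exact_mod_cast hs
  have p1 : (0:ℤ) < 64 * (s:ℤ)^6 := by positivity
  have p2 : (0:ℤ) < (s:ℤ)^2-4 := by nlinarith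
  have p3 : (0:ℤ) < 2*(s:ℤ)^2-1 := by nlinarith
  have p4 : (0:ℤ) < (s:ℤ)^2-1 := by nlinarith
  have pos : 0 < 64 * (s:ℤ)^6 * ((s:ℤ)^2-4) * (2*(s:ℤ)^2-1) * ((s:ℤ)^2-1) :=
    mul_pos (mul_pos (mul_pos p1 p2) p3) p4
  linarith [key, pos]


theorem stmt_13 (m : ℕ) (hm : 5 ≤ m) (hmodd : Odd m)
    (C : Submodule (ZMod 2) (Fin (2 ^ m) → ZMod 2))
    (hdim : Module.finrank (ZMod 2) C = 2 * m + 1)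
    (h1 : numwt C (2 ^ (m - 1) - 2 ^ ((m - 1) / 2)) = (2 ^ m - 1) * 2 ^ (m - 1))
    (h2 : numwt C (2 ^ (m - 1)) = (2 ^ m - 1) * (2 ^ (m + 1) - 2 ^ m + 2))
    (h3 : numwt C (2 ^ (m - 1) + 2 ^ ((m - 1) / 2)) = (2 ^ m - 1) * 2 ^ (m - 1))
    (h4 : numwt C (2 ^ m) = 1)
    (h0 : ∀ w : ℕ, w ≠ 0 → w ≠ 2 ^ (m - 1) - 2 ^ ((m - 1) / 2) →
      w ≠ 2 ^ (m - 1) → w ≠ 2 ^ (m - 1) + 2 ^ ((m - 1) / 2) → w ≠ 2 ^ m →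
      numwt C w = 0) :
    Module.finrank (ZMod 2) (dualCode C) = 2 ^ m - 2 * m - 1 ∧
    (∀ c ∈ dualCode C, c ≠ 0 → 6 ≤ wt c) ∧
    (∃ c ∈ dualCode C, wt c = 6) := by
  
  classical
  obtain ⟨r, hr⟩ := hmodd
  set s : ℕ := 2 ^ ((m - 1) / 2) with hsdef
  have hrm : (m - 1) / 2 = r := by omega
  have hs2 : 2 ^ (m - 1) = s ^ 2 := by
    rw [hsdef, hrm, ← pow_mul]
    congr 1
    omega
  have hn : 2 ^ m = 2 * s ^ 2 := by
    rw [← hs2, ← pow_succ']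
    congr 1
    omega
  have hs4 : 4 ≤ s := by
    rw [hsdef, hrm]
    calc 4 = 2 ^ 2 := rfl
    _ ≤ 2 ^ r := Nat.pow_le_pow_right (by omega) (by omega)
  obtain ⟨hss, hn5, hp5, hq5, hm5, h01⟩ := sub_facts s hs4
  have hmul2 : 2 ^ (m + 1) - 2 ^ m + 2 = 2 * s ^ 2 + 2 := by
    have : 2 ^ (m + 1) = 2 * 2 ^ m := by rw [pow_succ]; ring
    omega
  have h1' : numwt C (s ^ 2 - s) = (2 * s ^ 2 - 1) * s ^ 2 := by
    have e : numwt C (s ^ 2 - s) = numwt C (2 ^ (m - 1) - s) := by rw [hs2]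
    rw [e, h1, hs2, hn]
  have h2' : numwt C (s ^ 2) = (2 * s ^ 2 - 1) * (2 * s ^ 2 + 2) := by
    have e : numwt C (s ^ 2) = numwt C (2 ^ (m - 1)) := by rw [hs2]
    rw [e, h2, hmul2, hn]
  have h3' : numwt C (s ^ 2 + s) = (2 * s ^ 2 - 1) * s ^ 2 := by
    have e : numwt C (s ^ 2 + s) = numwt C (2 ^ (m - 1) + s) := by rw [hs2]
    rw [e, h3, hs2, hn]
  have h4' : numwt C (2 * s ^ 2) = 1 := by
    have e : numwt C (2 * s ^ 2) = numwt C (2 ^ m) := by rw [← hn]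
    rw [e, h4]
  have h0' : ∀ w : ℕ, w ≠ 0 → w ≠ s ^ 2 - s → w ≠ s ^ 2 → w ≠ s ^ 2 + s →
      w ≠ 2 * s ^ 2 → numwt C w = 0 := by
    intro w a b c d e
    apply h0 w a
    · rw [hs2]; exact b
    · rw [hs2]; exact c
    · rw [hs2]; exact d
    · rw [hn]; exact e
  -- weight distribution facts with s
  -- Part 1 : dimension
  have hdual := finrank_dualCode_add C
  rw [Fintype.card_fin, hdim] at hdual
  have part1 : Module.finrank (ZMod 2) (dualCode C) = 2 ^ m - 2 * m - 1 := by omega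
  -- cardinality of C
  set M := Nat.card C with hMdef
  have hM : M = 2 ^ (2 * m + 1) := by rw [hMdef, card_mod, hdim]
  have hM2 : 2 * (2 * s ^ 2) ^ 2 = M := by
    rw [hM, ← hn, pow_succ]
    ring
  have hM0 : M ≠ 0 := by rw [hM]; positivity
  -- grouping of weight sums
  have group : ∀ t : ℕ, 1 ≤ t →
      ∑ c : C, (Fintype.card (Fin (2 ^ m)) - wt (c : Fin (2 ^ m) → ZMod 2)).choose t
      = (2 * s ^ 2).choose t + ((2 * s ^ 2 - 1) * s ^ 2) * ((s ^ 2 + s).choose t)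
        + ((2 * s ^ 2 - 1) * (2 * s ^ 2 + 2)) * ((s ^ 2).choose t)
        + ((2 * s ^ 2 - 1) * s ^ 2) * ((s ^ 2 - s).choose t) := by
    intro t ht
    have hcard : Fintype.card (Fin (2 ^ m)) = 2 * s ^ 2 := by
      rw [Fintype.card_fin]; exact hn
    refine (sum_wt_group C (fun w => (Fintype.card (Fin (2 ^ m)) - w).choose t)).trans ?_
    simp only [hcard]
    set g : ℕ → ℕ := fun w => numwt C w * ((2 * s ^ 2 - w).choose t) with hg
    have hF : ({0, s ^ 2 - s, s ^ 2, s ^ 2 + s, 2 * s ^ 2} : Finset ℕ)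
        ⊆ Finset.range (2 * s ^ 2 + 1) := by
      intro x hx
      simp only [Finset.mem_insert, Finset.mem_singleton] at hx
      rw [Finset.mem_range]
      omega
    have hz : ∀ x ∈ Finset.range (2 * s ^ 2 + 1),
        x ∉ ({0, s ^ 2 - s, s ^ 2, s ^ 2 + s, 2 * s ^ 2} : Finset ℕ) → g x = 0 := by
      intro x _ hx
      simp only [Finset.mem_insert, Finset.mem_singleton, not_or] at hx
      obtain ⟨e0, e1, e2, e3, e4⟩ := hx
      rw [hg]
      simp only
      rw [h0' x e0 e1 e2 e3 e4, zero_mul]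
    rw [← Finset.sum_subset hF hz]
    have hins : ({0, s ^ 2 - s, s ^ 2, s ^ 2 + s, 2 * s ^ 2} : Finset ℕ)
        = insert 0 (insert (s ^ 2 - s) (insert (s ^ 2) (insert (s ^ 2 + s)
          ({2 * s ^ 2} : Finset ℕ)))) := rfl
    rw [hins]
    rw [Finset.sum_insert (by simp; omega), Finset.sum_insert (by simp; omega),
      Finset.sum_insert (by simp; omega), Finset.sum_insert (by simp; omega),
      Finset.sum_singleton]
    have hg0 : g 0 = (2 * s ^ 2).choose t := by
      rw [hg]; simp only [Nat.sub_zero]; rw [numwt_zero, one_mul]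
    have hg1 : g (s ^ 2 - s) = ((2 * s ^ 2 - 1) * s ^ 2) * ((s ^ 2 + s).choose t) := by
      rw [hg]; simp only
      rw [h1', show 2 * s ^ 2 - (s ^ 2 - s) = s ^ 2 + s by omega]
    have hg2 : g (s ^ 2) = ((2 * s ^ 2 - 1) * (2 * s ^ 2 + 2)) * ((s ^ 2).choose t) := by
      rw [hg]; simp only
      rw [h2', show 2 * s ^ 2 - s ^ 2 = s ^ 2 by omega]
    have hg3 : g (s ^ 2 + s) = ((2 * s ^ 2 - 1) * s ^ 2) * ((s ^ 2 - s).choose t) := by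
      rw [hg]; simp only
      rw [h3', show 2 * s ^ 2 - (s ^ 2 + s) = s ^ 2 - s by omega]
    have hg4 : g (2 * s ^ 2) = 0 := by
      rw [hg]; simp only
      rw [h4', Nat.sub_self, Nat.choose_eq_zero_of_lt (by omega), mul_zero]
    rw [hg0, hg1, hg2, hg3, hg4]
    ring_nf
  -- the sum over T identity
  have keyT : ∀ t : ℕ,
      (∑ T ∈ Finset.powersetCard t (Finset.univ : Finset (Fin (2 ^ m))),
        Nat.card {v : Fin (2 ^ m) → ZMod 2 // v ∈ dualCode C ∧ ∀ i ∉ T, v i = 0}) * M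
      = 2 ^ t * ∑ c : C, (Fintype.card (Fin (2 ^ m)) - wt (c : Fin (2 ^ m) → ZMod 2)).choose t := by
    intro t
    rw [Finset.sum_mul, ← double_count, Finset.mul_sum]
    apply Finset.sum_congr rfl
    intro T hT
    rw [count_T C T, (Finset.mem_powersetCard.mp hT).2]
  have cardP : ∀ t : ℕ,
      (Finset.powersetCard t (Finset.univ : Finset (Fin (2 ^ m)))).card
      = (2 * s ^ 2).choose t := by
    intro t
    rw [Finset.card_powersetCard, Finset.card_univ, Fintype.card_fin, hn]
  -- t = 5
  have sum5 : (∑ T ∈ Finset.powersetCard 5 (Finset.univ : Finset (Fin (2 ^ m))),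
      Nat.card {v : Fin (2 ^ m) → ZMod 2 // v ∈ dualCode C ∧ ∀ i ∉ T, v i = 0})
      = (2 * s ^ 2).choose 5 := by
    apply Nat.eq_of_mul_eq_mul_right (Nat.pos_of_ne_zero hM0)
    rw [keyT 5, group 5 (by omega), show (2:ℕ)^5 = 32 from rfl, ident5 s hs4, hM2]
    exact mul_comm _ _
  have one_le : ∀ (T : Finset (Fin (2 ^ m))),
      1 ≤ Nat.card {v : Fin (2 ^ m) → ZMod 2 // v ∈ dualCode C ∧ ∀ i ∉ T, v i = 0} := by
    intro T
    have : Nonempty {v : Fin (2 ^ m) → ZMod 2 // v ∈ dualCode C ∧ ∀ i ∉ T, v i = 0} :=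
      ⟨⟨0, (dualCode C).zero_mem, fun _ _ => rfl⟩⟩
    exact Nat.card_pos
  have each1 : ∀ T ∈ Finset.powersetCard 5 (Finset.univ : Finset (Fin (2 ^ m))),
      Nat.card {v : Fin (2 ^ m) → ZMod 2 // v ∈ dualCode C ∧ ∀ i ∉ T, v i = 0} = 1 := by
    intro T hT
    by_contra hne
    have h2le : 2 ≤ Nat.card {v : Fin (2 ^ m) → ZMod 2 // v ∈ dualCode C ∧ ∀ i ∉ T, v i = 0} :=
      lt_of_le_of_ne (one_le T) (Ne.symm hne)
    have hlt : (Finset.powersetCard 5 (Finset.univ : Finset (Fin (2 ^ m)))).card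
        < ∑ T ∈ Finset.powersetCard 5 (Finset.univ : Finset (Fin (2 ^ m))),
          Nat.card {v : Fin (2 ^ m) → ZMod 2 // v ∈ dualCode C ∧ ∀ i ∉ T, v i = 0} := by
      rw [Finset.card_eq_sum_ones]
      exact Finset.sum_lt_sum (fun i _ => one_le i) ⟨T, hT, h2le⟩
    rw [sum5, cardP 5] at hlt
    exact absurd hlt (lt_irrefl _)
  -- Part 2 : minimum distance at least 6
  have part2 : ∀ c ∈ dualCode C, c ≠ 0 → 6 ≤ wt c := by
    intro c hc hc0
    by_contra hlt
    push_neg at hlt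
    set S : Finset (Fin (2 ^ m)) := Finset.univ.filter (fun i => c i ≠ 0) with hS
    have hScard : S.card = wt c := (wt_eq_filter_card c).symm
    have hS5 : S.card ≤ 5 := by rw [hScard]; exact Nat.lt_succ_iff.mp hlt
    have h5n : 5 ≤ (Finset.univ : Finset (Fin (2 ^ m))).card := by
      rw [Finset.card_univ, Fintype.card_fin, hn]
      exact hn5
    obtain ⟨T, hST, hTuniv, hTcard⟩ :=
      Finset.exists_subsuperset_card_eq (Finset.subset_univ S) hS5 h5n
    have hTmem : T ∈ Finset.powersetCard 5 (Finset.univ : Finset (Fin (2 ^ m))) :=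
      Finset.mem_powersetCard.mpr ⟨Finset.subset_univ T, hTcard⟩
    have hcT : ∀ i ∉ T, c i = 0 := by
      intro i hi
      by_contra hci
      exact hi (hST (by rw [hS]; simp [hci]))
    have : Nontrivial {v : Fin (2 ^ m) → ZMod 2 // v ∈ dualCode C ∧ ∀ i ∉ T, v i = 0} := by
      refine ⟨⟨0, (dualCode C).zero_mem, fun _ _ => rfl⟩, ⟨c, hc, hcT⟩, ?_⟩
      intro h
      exact hc0 (congrArg Subtype.val h).symm
    have h1lt := Finite.one_lt_card_iff_nontrivial.mpr this
    rw [each1 T hTmem] at h1lt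
    exact absurd h1lt (lt_irrefl _)
  -- Part 3 : existence of weight 6 codeword
  have sum6 : (2 * s ^ 2).choose 6
      < ∑ T ∈ Finset.powersetCard 6 (Finset.univ : Finset (Fin (2 ^ m))),
        Nat.card {v : Fin (2 ^ m) → ZMod 2 // v ∈ dualCode C ∧ ∀ i ∉ T, v i = 0} := by
    have hmul : (2 * s ^ 2).choose 6 * M
        < (∑ T ∈ Finset.powersetCard 6 (Finset.univ : Finset (Fin (2 ^ m))),
          Nat.card {v : Fin (2 ^ m) → ZMod 2 // v ∈ dualCode C ∧ ∀ i ∉ T, v i = 0}) * M := by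
      rw [keyT 6, group 6 (by norm_num), show (2:ℕ)^6 = 64 from rfl]
      calc (2 * s ^ 2).choose 6 * M = 2 * (2 * s ^ 2) ^ 2 * ((2 * s ^ 2).choose 6) := by
            rw [← hM2]; ring
        _ < _ := ident6 s hs4
    exact Nat.lt_of_mul_lt_mul_right hmul
  obtain ⟨T, hT, h2le⟩ : ∃ T ∈ Finset.powersetCard 6 (Finset.univ : Finset (Fin (2 ^ m))),
      2 ≤ Nat.card {v : Fin (2 ^ m) → ZMod 2 // v ∈ dualCode C ∧ ∀ i ∉ T, v i = 0} := by
    by_contra hcon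
    push_neg at hcon
    have hle : ∑ T ∈ Finset.powersetCard 6 (Finset.univ : Finset (Fin (2 ^ m))),
        Nat.card {v : Fin (2 ^ m) → ZMod 2 // v ∈ dualCode C ∧ ∀ i ∉ T, v i = 0}
        ≤ (Finset.powersetCard 6 (Finset.univ : Finset (Fin (2 ^ m)))).card * 1 := by
      apply Finset.sum_le_card_nsmul
      intro x hx
      exact Nat.lt_succ_iff.mp (hcon x hx)
    rw [mul_one, cardP 6] at hle
    exact absurd (lt_of_lt_of_le sum6 hle) (lt_irrefl _)
  have hnt : Nontrivial {v : Fin (2 ^ m) → ZMod 2 // v ∈ dualCode C ∧ ∀ i ∉ T, v i = 0} :=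
    Finite.one_lt_card_iff_nontrivial.mp h2le
  obtain ⟨a, b, hab⟩ := hnt
  have hTcard : T.card = 6 := (Finset.mem_powersetCard.mp hT).2
  have hex : ∃ v : Fin (2 ^ m) → ZMod 2, v ∈ dualCode C ∧ (∀ i ∉ T, v i = 0) ∧ v ≠ 0 := by
    by_cases ha : a.1 = 0
    · refine ⟨b.1, b.2.1, b.2.2, ?_⟩
      intro hb
      exact hab (Subtype.ext (by rw [ha, hb]))
    · exact ⟨a.1, a.2.1, a.2.2, ha⟩
  obtain ⟨v, hv, hvT, hv0⟩ := hex
  have hwle : wt v ≤ 6 := hTcard ▸ wt_le_of_supp_subset hvT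
  have hwge : 6 ≤ wt v := part2 v hv hv0
  exact ⟨part1, part2, ⟨v, hv, le_antisymm hwle hwge⟩⟩
end
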